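/- Let Γ = Γ₁ × Γ₂ ⊆ ℝ² with Γ₁ = Γ₂ = (−∞,0], F : ℝ → ℝ², F(x) = (−x, x + x²), and x̄ = 0. Then pseudo-normality fails at x̄: for λ̄ = (1,1) one has λ̄ ∈ N_Γ(F(x̄)), ∇F(x̄)ᵀλ̄ = 0, and for any sequence x_k ↓ 0, ⟨λ̄, F(x_k) − F(x̄)⟩ = x_k² > 0. -/

import Mathlib

open Set Filter Topology Metric

noncomputable section

def convNormal {E : Type*} [NormedAddCommGroup E] [InnerProductSpace ℝ E]
    (P : Set E) (y : E) : Set E :=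
  {v | ∀ p ∈ P, (inner ℝ v (p - y) : ℝ) ≤ 0}

def v2 (a b : ℝ) : EuclideanSpace ℝ (Fin 2) :=
  (WithLp.equiv 2 (Fin 2 → ℝ)).symm ![a, b]

def Gamma15 : Set (EuclideanSpace ℝ (Fin 2)) :=
  {y | y 0 ≤ 0 ∧ y 1 ≤ 0}

def F15 (x : ℝ) : EuclideanSpace ℝ (Fin 2) := v2 (-x) (x + x ^ 2)

lemma v2_apply0 (a b : ℝ) : v2 a b 0 = a := rfl
lemma v2_apply1 (a b : ℝ) : v2 a b 1 = b := rfl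

lemma inner2 (x y : EuclideanSpace ℝ (Fin 2)) :
    (inner ℝ x y : ℝ) = x 0 * y 0 + x 1 * y 1 := by
  simp [PiLp.inner_apply, Fin.sum_univ_two, mul_comm]

/-- Pseudo-normality fails at `x̄ = 0`: `λ̄ = (1,1)` is a nonzero multiplier in the normal
cone, in the kernel of `∇F(0)ᵀ` (where `∇F(0) = (−1,1)ᵀ`), and every `x > 0` gives
`⟨λ̄, F(x) − F(0)⟩ = x² > 0`; in particular a sequence `x_k → 0` violating
pseudo-normality exists. -/
theorem stmt15 :
    v2 1 1 ≠ 0 ∧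
    v2 1 1 ∈ convNormal Gamma15 (F15 0) ∧
    (inner ℝ (v2 1 1) (v2 (-1) 1) : ℝ) = 0 ∧
    (∀ x : ℝ, 0 < x →
      (inner ℝ (v2 1 1) (F15 x - F15 0) : ℝ) = x ^ 2 ∧
      0 < (inner ℝ (v2 1 1) (F15 x - F15 0) : ℝ)) ∧
    ∃ xk : ℕ → ℝ, Tendsto xk atTop (𝓝 0) ∧
      ∀ k, 0 < (inner ℝ (v2 1 1) (F15 (xk k) - F15 0) : ℝ) := by
  have hF0 : F15 0 = v2 0 0 := by simp [F15]
  have key : ∀ x : ℝ, (inner ℝ (v2 1 1) (F15 x - F15 0) : ℝ) = x ^ 2 := by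
    intro x
    rw [inner2]
    show (1:ℝ) * ((-x) - (-0)) + 1 * ((x + x^2) - (0 + 0^2)) = x ^ 2
    ring
  refine ⟨?_, ?_, ?_, ?_, ?_⟩
  · intro h
    have : v2 1 1 0 = (0 : EuclideanSpace ℝ (Fin 2)) 0 := by rw [h]
    simp [v2_apply0] at this
  · intro p hp
    rw [inner2]
    have h0 : p 0 ≤ 0 := hp.1
    have h1 : p 1 ≤ 0 := hp.2
    simp only [PiLp.sub_apply, v2_apply0, v2_apply1, hF0]
    nlinarith
  · rw [inner2]; simp [v2_apply0, v2_apply1]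
  · intro x hx
    refine ⟨key x, ?_⟩
    rw [key x]; positivity
  · refine ⟨fun k => 1 / (k + 1), ?_, ?_⟩
    · exact tendsto_one_div_add_atTop_nhds_zero_nat
    · intro k
      rw [key]
      positivity
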